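/- Let x₁,...,x_k ∈ ℝ² be points pairwise at distance at least r/2, with k ≥ 2. Then the minimum spanning tree of any finite superset V ⊇ {x₁,...,x_k} in ℝ² has cost at least (k−1)·r/4. -/

import Mathlib

noncomputable def graphCost {V : Type*} {X : Type*} [MetricSpace X] [Fintype V]
    (G : SimpleGraph V) (p : V → X) : ℝ :=
  have : DecidableEq V := Classical.decEq V
  have : DecidableRel G.Adj := Classical.decRel _
  ∑ e ∈ G.edgeFinset, Sym2.lift ⟨fun u v => dist (p u) (p v), fun u v => dist_comm (p u) (p v)⟩ e

open SimpleGraph Finset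

namespace Stmt16


variable {α : Type*} {X : Type*} [MetricSpace X]

noncomputable def wt (p : α → X) : Sym2 α → ℝ :=
  Sym2.lift ⟨fun u v => dist (p u) (p v), fun u v => dist_comm (p u) (p v)⟩

lemma wt_nonneg (p : α → X) (e : Sym2 α) : 0 ≤ wt p e := by
  induction e using Sym2.ind with
  | _ u v => exact dist_nonneg

open scoped Classical in
noncomputable def rcost [Fintype α] (p : α → X) (G : SimpleGraph α) (v₀ : α) : ℝ :=
  ∑ e ∈ G.edgeFinset, if ∀ y ∈ e, G.Reachable v₀ y then wt p e else 0

open scoped Classical in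
lemma edgeFinset_delete_eq [Fintype α] (G : SimpleGraph α) (e : Sym2 α) :
    (G.deleteEdges {e}).edgeFinset = G.edgeFinset.erase e := by
  ext f
  simp [mem_edgeFinset, edgeSet_deleteEdges, Finset.mem_erase, and_comm]

open scoped Classical in
lemma rcost_bridge [Fintype α] (p : α → X) (G : SimpleGraph α) {a b v₀ : α} (hab : G.Adj a b)
    (hva : (G.deleteEdges {s(a,b)}).Reachable v₀ a)
    (hnab : ¬ (G.deleteEdges {s(a,b)}).Reachable a b) :
    rcost p (G.deleteEdges {s(a,b)}) v₀ + rcost p (G.deleteEdges {s(a,b)}) b + wt p s(a,b)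
      ≤ rcost p G v₀ := by
  set G' := G.deleteEdges {s(a,b)} with hG'
  have hle : G' ≤ G := deleteEdges_le _
  have hGva : G.Reachable v₀ a := hva.mono hle
  have hGvb : G.Reachable v₀ b := hGva.trans hab.reachable
  have hmem : s(a,b) ∈ G.edgeFinset := mem_edgeFinset.mpr hab
  have key : rcost p G' v₀ + rcost p G' b ≤
      ∑ e ∈ G.edgeFinset.erase s(a,b), (if ∀ y ∈ e, G.Reachable v₀ y then wt p e else 0) := by
    unfold rcost
    rw [← Finset.sum_add_distrib, hG', Finset.sum_congr (s₂ := G.edgeFinset.erase s(a,b))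
      (by convert edgeFinset_delete_eq G s(a,b)) (fun _ _ => rfl)]
    apply Finset.sum_le_sum
    intro e he
    induction e using Sym2.ind with
    | _ u v =>
      by_cases h1 : ∀ y ∈ s(u,v), G'.Reachable v₀ y
      · have h2 : ¬ ∀ y ∈ s(u,v), G'.Reachable b y := by
          intro h2
          have hu1 : G'.Reachable v₀ u := h1 u (Sym2.mem_mk_left u v)
          have hu2 : G'.Reachable b u := h2 u (Sym2.mem_mk_left u v)
          exact hnab (hva.symm.trans (hu1.trans hu2.symm))
        rw [if_pos h1, if_neg h2, if_pos (fun y hy => (h1 y hy).mono hle)]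
        simp
      · rw [if_neg h1]
        by_cases h2 : ∀ y ∈ s(u,v), G'.Reachable b y
        · rw [if_pos h2, if_pos (fun y hy => hGvb.trans ((h2 y hy).mono hle))]
          simp
        · rw [if_neg h2]
          simp only [zero_add, add_zero]
          split
          · exact wt_nonneg p _
          · exact le_rfl
  have hsplit : rcost p G v₀ =
      wt p s(a,b) + ∑ e ∈ G.edgeFinset.erase s(a,b),
        (if ∀ y ∈ e, G.Reachable v₀ y then wt p e else 0) := by
    unfold rcost
    rw [← Finset.add_sum_erase _ _ hmem]
    congr 1
    rw [if_pos]
    intro y hy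
    rw [Sym2.mem_iff] at hy
    rcases hy with rfl | rfl
    · exact hGva
    · exact hGvb
  rw [hsplit]
  linarith

open scoped Classical in
lemma rcost_nonneg [Fintype α] (p : α → X) (G : SimpleGraph α) (v₀ : α) :
    0 ≤ rcost p G v₀ := by
  apply Finset.sum_nonneg
  intro e _
  split
  · exact wt_nonneg p e
  · exact le_rfl

open scoped Classical in
lemma rcost_mono [Fintype α] (p : α → X) {G G' : SimpleGraph α} (hle : G' ≤ G) (v₀ : α) :
    rcost p G' v₀ ≤ rcost p G v₀ := by
  unfold rcost
  calc ∑ e ∈ G'.edgeFinset, (if ∀ y ∈ e, G'.Reachable v₀ y then wt p e else 0)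
      ≤ ∑ e ∈ G'.edgeFinset, (if ∀ y ∈ e, G.Reachable v₀ y then wt p e else 0) := by
        apply Finset.sum_le_sum
        intro e he
        split
        · rename_i h
          rw [if_pos fun y hy => (h y hy).mono hle]
        · split
          · exact wt_nonneg p e
          · exact le_rfl
    _ ≤ ∑ e ∈ G.edgeFinset, (if ∀ y ∈ e, G.Reachable v₀ y then wt p e else 0) := by
        apply Finset.sum_le_sum_of_subset_of_nonneg (edgeFinset_mono hle)
        intro e _ _
        split
        · exact wt_nonneg p e
        · exact le_rfl

/-- Splitting reachability when deleting one edge. -/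
lemma reachable_split {G : SimpleGraph α} {a b : α} {u v : α} (w : G.Walk u v) :
    (G.deleteEdges {s(a,b)}).Reachable u v ∨
      ((G.deleteEdges {s(a,b)}).Reachable u a ∧ (G.deleteEdges {s(a,b)}).Reachable b v) ∨
      ((G.deleteEdges {s(a,b)}).Reachable u b ∧ (G.deleteEdges {s(a,b)}).Reachable a v) := by
  set G' := G.deleteEdges {s(a,b)} with hG'
  induction w with
  | nil => exact Or.inl (Reachable.refl _)
  | @cons u c v h q ih =>
    by_cases he : s(u, c) = s(a, b)
    · rw [Sym2.eq_iff] at he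
      rcases he with ⟨rfl, rfl⟩ | ⟨rfl, rfl⟩
      · -- u = a, c = b
        rcases ih with h1 | ⟨h2a, h2b⟩ | ⟨h3a, h3b⟩
        · exact Or.inr (Or.inl ⟨Reachable.refl _, h1⟩)
        · exact Or.inr (Or.inl ⟨Reachable.refl _, h2b⟩)
        · exact Or.inl h3b
      · -- u = b, c = a
        rcases ih with h1 | ⟨h2a, h2b⟩ | ⟨h3a, h3b⟩
        · exact Or.inr (Or.inr ⟨Reachable.refl _, h1⟩)
        · exact Or.inl h2b
        · exact Or.inr (Or.inr ⟨Reachable.refl _, h3b⟩)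
    · have hadj : G'.Adj u c := by
        rw [hG', deleteEdges_adj]
        exact ⟨h, by simpa using he⟩
      rcases ih with h1 | ⟨h2a, h2b⟩ | ⟨h3a, h3b⟩
      · exact Or.inl (hadj.reachable.trans h1)
      · exact Or.inr (Or.inl ⟨hadj.reachable.trans h2a, h2b⟩)
      · exact Or.inr (Or.inr ⟨hadj.reachable.trans h3a, h3b⟩)



variable {α : Type*} {X : Type*} [MetricSpace X]

noncomputable def wlen (p : α → X) {G : SimpleGraph α} : ∀ {u v : α}, G.Walk u v → ℝ
  | _, _, .nil => 0
  | u, _, .cons (v := c) _ q => dist (p u) (p c) + wlen p q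

@[simp] lemma wlen_nil (p : α → X) {G : SimpleGraph α} {u : α} :
    wlen p (Walk.nil : G.Walk u u) = 0 := rfl

@[simp] lemma wlen_cons (p : α → X) {G : SimpleGraph α} {u c v : α} (h : G.Adj u c)
    (q : G.Walk c v) : wlen p (Walk.cons h q) = dist (p u) (p c) + wlen p q := by
  simp [wlen]

@[simp] lemma wlen_append (p : α → X) {G : SimpleGraph α} {u v w : α} (q : G.Walk u v)
    (q' : G.Walk v w) : wlen p (q.append q') = wlen p q + wlen p q' := by
  induction q with
  | nil => simp
  | cons h q ih => simp [ih]; ring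

lemma wlen_nonneg (p : α → X) {G : SimpleGraph α} {u v : α} (q : G.Walk u v) :
    0 ≤ wlen p q := by
  induction q with
  | nil => simp
  | cons h q ih => simpa using add_nonneg dist_nonneg ih

@[simp] lemma wlen_mapLe (p : α → X) {G G' : SimpleGraph α} (hle : G ≤ G') {u v : α}
    (q : G.Walk u v) : wlen p (q.mapLe hle) = wlen p q := by
  induction q with
  | nil => rfl
  | cons h q ih => simp [Walk.mapLe, ih]

@[simp] lemma support_mapLe {G G' : SimpleGraph α} (hle : G ≤ G') {u v : α}
    (q : G.Walk u v) : (q.mapLe hle).support = q.support := by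
  induction q with
  | nil => rfl
  | cons h q ih => simp [Walk.mapLe] at ih ⊢

lemma wlen_eq_sum (p : α → X) {G : SimpleGraph α} {u v : α} (q : G.Walk u v) :
    wlen p q = ∑ i ∈ Finset.range q.length, dist (p (q.getVert i)) (p (q.getVert (i + 1))) := by
  induction q with
  | nil => simp
  | cons h q ih =>
    rw [Walk.length_cons, Finset.sum_range_succ']
    simp only [Walk.getVert_cons_succ, Walk.getVert_zero, wlen_cons]
    rw [ih, add_comm]



variable {α : Type*} {X : Type*} [MetricSpace X]

/-- metric split lemma -/
lemma extract (f : ℕ → X) (n : ℕ) {k : ℕ} (s : ℝ) (hs : 0 < s)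
    (x : Fin k → X) (hsep : ∀ i j, i ≠ j → s ≤ dist (x i) (x j))
    (hcov : ∀ i, ∃ m, m ≤ n ∧ f m = x i) :
    ((k : ℝ) - 1) * s ≤ ∑ i ∈ Finset.range n, dist (f i) (f (i + 1)) := by
  have hsum_nonneg : (0:ℝ) ≤ ∑ i ∈ Finset.range n, dist (f i) (f (i + 1)) :=
    Finset.sum_nonneg fun _ _ => dist_nonneg
  rcases Nat.eq_zero_or_pos k with hk | hk
  · subst hk; simpa using le_trans (by norm_num; exact hs.le) hsum_nonneg
  have hinj : Function.Injective x := by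
    intro i j hij
    by_contra hne
    have := hsep i j hne
    rw [hij] at this
    have h0 : dist (x j) (x j) = 0 := dist_self _
    linarith
  choose m hmn hfm using hcov
  have minj : Function.Injective m := by
    intro i j hij
    apply hinj
    rw [← hfm i, ← hfm j, hij]
  set M : Finset ℕ := Finset.univ.image m with hM
  have hMcard : M.card = k := by
    rw [hM, Finset.card_image_of_injective _ minj, Finset.card_univ, Fintype.card_fin]
  set a := M.orderIsoOfFin hMcard with ha
  set b : ℕ → ℕ := fun t => (a ⟨min t (k-1), by omega⟩ : ℕ) with hb
  have hbmem : ∀ t, b t ∈ M := fun t => (a _).2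
  have hbn : ∀ t, b t ≤ n := by
    intro t
    obtain ⟨i, _, hi⟩ := Finset.mem_image.mp (hbmem t)
    rw [hb]; simp only []
    calc (a ⟨min t (k-1), by omega⟩ : ℕ) = m i := hi.symm
    _ ≤ n := hmn i
  have hbmono : Monotone b := by
    intro t t' htt
    simp only [hb]
    have hle : (⟨min t (k-1), by omega⟩ : Fin k) ≤ ⟨min t' (k-1), by omega⟩ := by
      rw [Fin.mk_le_mk]; exact min_le_min htt le_rfl
    exact Subtype.coe_le_coe.mpr (a.monotone hle)
  have hbx : ∀ t, ∃ i, f (b t) = x i ∧ m i = b t := by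
    intro t
    obtain ⟨i, _, hi⟩ := Finset.mem_image.mp (hbmem t)
    exact ⟨i, by rw [← hi, hfm], hi⟩
  have hstep : ∀ t, t + 1 ≤ k - 1 → s ≤ dist (f (b t)) (f (b (t+1))) := by
    intro t ht
    obtain ⟨i₁, hfi₁, hmi₁⟩ := hbx t
    obtain ⟨i₂, hfi₂, hmi₂⟩ := hbx (t+1)
    have hne : b t ≠ b (t+1) := by
      have : (⟨min t (k-1), by omega⟩ : Fin k) < ⟨min (t+1) (k-1), by omega⟩ := by
        simp [Fin.lt_def]; omega
      exact ne_of_lt (a.strictMono this)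
    have : i₁ ≠ i₂ := by
      intro h; rw [h, hmi₂] at hmi₁; exact hne hmi₁.symm
    rw [hfi₁, hfi₂]
    exact hsep i₁ i₂ this
  set D : ℕ → ℕ → ℝ := fun u v => ∑ i ∈ Finset.Ico u v, dist (f i) (f (i+1)) with hD
  have dist_le_D : ∀ u v, u ≤ v → dist (f u) (f v) ≤ D u v := by
    intro u v huv
    induction v, huv using Nat.le_induction with
    | base => simp [hD]
    | succ v huv ih =>
      calc dist (f u) (f (v+1)) ≤ dist (f u) (f v) + dist (f v) (f (v+1)) := dist_triangle _ _ _
      _ ≤ D u v + dist (f v) (f (v+1)) := by linarith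
      _ = D u (v+1) := by rw [hD]; exact (Finset.sum_Ico_succ_top huv _).symm
  have hDadd : ∀ u v w, u ≤ v → v ≤ w → D u v + D v w = D u w := by
    intro u v w huv hvw
    exact Finset.sum_Ico_consecutive _ huv hvw
  have claim : ∀ t, t ≤ k - 1 → (t : ℝ) * s ≤ D (b 0) (b t) := by
    intro t
    induction t with
    | zero => intro _; simp [hD]
    | succ t ih =>
      intro ht
      have ht' : t ≤ k - 1 := by omega
      have h1 : (t : ℝ) * s ≤ D (b 0) (b t) := ih ht'
      have h2 : s ≤ dist (f (b t)) (f (b (t+1))) := hstep t ht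
      have h3 : dist (f (b t)) (f (b (t+1))) ≤ D (b t) (b (t+1)) :=
        dist_le_D _ _ (hbmono (by omega))
      have h4 : D (b 0) (b t) + D (b t) (b (t+1)) = D (b 0) (b (t+1)) :=
        hDadd _ _ _ (hbmono (by omega)) (hbmono (by omega))
      push_cast
      linarith
  have hfinal : ((k - 1 : ℕ) : ℝ) * s ≤ D (b 0) (b (k-1)) := claim (k-1) le_rfl
  have hsub : D (b 0) (b (k-1)) ≤ ∑ i ∈ Finset.range n, dist (f i) (f (i + 1)) := by
    rw [hD]
    apply Finset.sum_le_sum_of_subset_of_nonneg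
    · intro i hi
      rw [Finset.mem_Ico] at hi
      rw [Finset.mem_range]
      exact lt_of_lt_of_le hi.2 (hbn _)
    · intro _ _ _; exact dist_nonneg
  have hcast : ((k : ℝ) - 1) = ((k - 1 : ℕ) : ℝ) := by
    rw [Nat.cast_sub hk]; norm_num
  rw [hcast]
  linarith


open scoped Classical in
lemma glue [Fintype α] (p : α → X) {G : SimpleGraph α} {a b v₀ : α} (hab : G.Adj a b)
    (hva : (G.deleteEdges {s(a,b)}).Reachable v₀ a)
    (hnab : ¬ (G.deleteEdges {s(a,b)}).Reachable a b)
    (w₁ : (G.deleteEdges {s(a,b)}).Walk v₀ v₀)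
    (hcov₁ : ∀ v, (G.deleteEdges {s(a,b)}).Reachable v₀ v → v ∈ w₁.support)
    (hlen₁ : wlen p w₁ ≤ 2 * rcost p (G.deleteEdges {s(a,b)}) v₀)
    (w₂ : (G.deleteEdges {s(a,b)}).Walk b b)
    (hcov₂ : ∀ v, (G.deleteEdges {s(a,b)}).Reachable b v → v ∈ w₂.support)
    (hlen₂ : wlen p w₂ ≤ 2 * rcost p (G.deleteEdges {s(a,b)}) b) :
    ∃ w : G.Walk v₀ v₀, (∀ v, G.Reachable v₀ v → v ∈ w.support) ∧
      wlen p w ≤ 2 * rcost p G v₀ := by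
  have hle : G.deleteEdges {s(a,b)} ≤ G := deleteEdges_le _
  have haw : a ∈ w₁.support := hcov₁ a hva
  set t : G.Walk v₀ a := (w₁.takeUntil a haw).mapLe hle with ht
  set d : G.Walk a v₀ := (w₁.dropUntil a haw).mapLe hle with hd
  set mid : G.Walk a a :=
    Walk.cons hab ((w₂.mapLe hle).append (Walk.cons hab.symm Walk.nil)) with hmid
  refine ⟨t.append (mid.append d), ?_, ?_⟩
  · intro v hv
    obtain ⟨w⟩ := hv
    rcases reachable_split (a := a) (b := b) w with h1 | ⟨h2a, h2b⟩ | ⟨h3a, h3b⟩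
    · have hv1 : v ∈ w₁.support := hcov₁ v h1
      rw [← Walk.take_spec w₁ haw, Walk.mem_support_append_iff] at hv1
      simp only [Walk.mem_support_append_iff, ht, hd, support_mapLe]
      tauto
    · have hv2 : v ∈ w₂.support := hcov₂ v h2b
      simp only [Walk.mem_support_append_iff, hmid, Walk.support_cons, List.mem_cons,
        Walk.mem_support_append_iff, support_mapLe]
      tauto
    · exact absurd (hva.symm.trans h3a) hnab
  · have hsum : wlen p t + wlen p d = wlen p w₁ := by
      rw [ht, hd, wlen_mapLe, wlen_mapLe, ← wlen_append, Walk.take_spec]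
    have hwt : wt p s(a,b) = dist (p a) (p b) := rfl
    have hbr := rcost_bridge p G hab hva hnab
    have hmlen : wlen p mid = dist (p a) (p b) + wlen p w₂ + dist (p b) (p a) := by
      rw [hmid]; simp [wlen_cons, wlen_append, wlen_mapLe]; ring
    rw [wlen_append, wlen_append, hmlen]
    rw [dist_comm (p b) (p a)]
    linarith

open scoped Classical in
lemma tour [Fintype α] (p : α → X) :
    ∀ (n : ℕ) (G : SimpleGraph α), G.edgeFinset.card = n → ∀ v₀ : α,
      ∃ w : G.Walk v₀ v₀, (∀ v, G.Reachable v₀ v → v ∈ w.support) ∧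
        wlen p w ≤ 2 * rcost p G v₀ := by
  intro n
  induction n using Nat.strong_induction_on with
  | _ n IH =>
  intro G hcard v₀
  by_cases hE : ∃ a b : α, G.Adj a b ∧ G.Reachable v₀ a ∧ G.Reachable v₀ b
  · obtain ⟨a, b, hab, hva0, hvb0⟩ := hE
    have hle : G.deleteEdges {s(a,b)} ≤ G := deleteEdges_le _
    have hmem : s(a,b) ∈ G.edgeFinset := mem_edgeFinset.mpr hab
    have hEF : (G.deleteEdges {s(a,b)}).edgeFinset = G.edgeFinset.erase s(a,b) :=
      edgeFinset_delete_eq G s(a,b)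
    have hcard' : (G.deleteEdges {s(a,b)}).edgeFinset.card < n := by
      rw [hEF, ← hcard]
      exact Finset.card_erase_lt_of_mem hmem
    by_cases hr : (G.deleteEdges {s(a,b)}).Reachable a b
    · -- not a bridge: delete it
      have htrans : ∀ u v : α, G.Reachable u v → (G.deleteEdges {s(a,b)}).Reachable u v := by
        intro u v huv
        obtain ⟨w⟩ := huv
        rcases reachable_split (a := a) (b := b) w with h1 | ⟨h2a, h2b⟩ | ⟨h3a, h3b⟩
        · exact h1
        · exact (h2a.trans hr).trans h2b
        · exact (h3a.trans hr.symm).trans h3b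
      obtain ⟨w, hcov, hlen⟩ := IH _ hcard' (G.deleteEdges {s(a,b)}) (by convert rfl) v₀
      refine ⟨w.mapLe hle, ?_, ?_⟩
      · intro v hv
        rw [support_mapLe]
        exact hcov v (htrans _ _ hv)
      · rw [wlen_mapLe]
        exact hlen.trans (by linarith [rcost_mono p hle v₀])
    · -- bridge
      have hside : (G.deleteEdges {s(a,b)}).Reachable v₀ a ∨
          (G.deleteEdges {s(a,b)}).Reachable v₀ b := by
        obtain ⟨w⟩ := hva0
        rcases reachable_split (a := a) (b := b) w with h1 | ⟨h2a, _⟩ | ⟨h3a, _⟩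
        · exact Or.inl h1
        · exact Or.inl h2a
        · exact Or.inr h3a
      rcases hside with hva | hvb
      · obtain ⟨w₁, hcov₁, hlen₁⟩ := IH _ hcard' (G.deleteEdges {s(a,b)}) (by convert rfl) v₀
        obtain ⟨w₂, hcov₂, hlen₂⟩ := IH _ hcard' (G.deleteEdges {s(a,b)}) (by convert rfl) b
        exact glue p hab hva hr w₁ hcov₁ hlen₁ w₂ hcov₂ hlen₂
      · -- symmetric: swap a and b
        have hswap : s(b,a) = s(a,b) := Sym2.eq_swap
        have hr' : ¬ (G.deleteEdges {s(b,a)}).Reachable b a := by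
          rw [hswap]
          intro h
          exact hr h.symm
        have hvb' : (G.deleteEdges {s(b,a)}).Reachable v₀ b := by rw [hswap]; exact hvb
        have hcard'' : (G.deleteEdges {s(b,a)}).edgeFinset.card < n := by rw [hswap]; exact hcard'
        obtain ⟨w₁, hcov₁, hlen₁⟩ := IH _ hcard'' (G.deleteEdges {s(b,a)}) (by convert rfl) v₀
        obtain ⟨w₂, hcov₂, hlen₂⟩ := IH _ hcard'' (G.deleteEdges {s(b,a)}) (by convert rfl) a
        exact glue p hab.symm hvb' hr' w₁ hcov₁ hlen₁ w₂ hcov₂ hlen₂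
  · refine ⟨Walk.nil, ?_, ?_⟩
    · intro v hv
      obtain ⟨w⟩ := hv
      cases w with
      | nil => simp
      | @cons _ c _ h q =>
        exact absurd ⟨_, c, h, Reachable.refl _, h.reachable⟩ hE
    · simpa using mul_nonneg (by norm_num : (0:ℝ) ≤ 2) (rcost_nonneg p G v₀)


open scoped Classical in
lemma rcost_eq [Fintype α] (p : α → X) (G : SimpleGraph α) (v₀ : α)
    (h : ∀ v, G.Reachable v₀ v) :
    rcost p G v₀ = ∑ e ∈ G.edgeFinset, wt p e := by
  unfold rcost
  apply Finset.sum_congr rfl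
  intro e _
  exact if_pos fun y _ => h y

lemma sum_indep {β : Type*} (g : Sym2 β → ℝ) (S : Set (Sym2 β))
    (F1 F2 : Finset (Sym2 β)) (h1 : ∀ e, e ∈ F1 ↔ e ∈ S) (h2 : ∀ e, e ∈ F2 ↔ e ∈ S) :
    ∑ e ∈ F1, g e = ∑ e ∈ F2, g e := by
  congr 1
  ext e
  rw [h1, h2]


end Stmt16

/-- If `V` contains `k ≥ 2` points pairwise at distance at least `r/2`, then every
spanning tree of `V` has cost at least `(k-1)·r/4`. -/
theorem stmt_16 (k : ℕ) (hk : 2 ≤ k) (r : ℝ) (hr : 0 < r)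
    (x : Fin k → EuclideanSpace ℝ (Fin 2)) (hinj : Function.Injective x)
    (hsep : ∀ i j : Fin k, i ≠ j → r / 2 ≤ dist (x i) (x j))
    (V : Finset (EuclideanSpace ℝ (Fin 2))) (hx : ∀ i, x i ∈ V)
    (G : SimpleGraph ↥V) (hG : G.IsTree) :
    (k - 1 : ℝ) * r / 4 ≤ graphCost G (fun v => (v : EuclideanSpace ℝ (Fin 2))) := by
  classical
  set p : ↥V → EuclideanSpace ℝ (Fin 2) := fun v => (v : EuclideanSpace ℝ (Fin 2)) with hp
  have hpre : G.Preconnected := hG.isConnected.preconnected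
  set v₀ : ↥V := ⟨x ⟨0, by omega⟩, hx _⟩ with hv₀
  obtain ⟨w, hcov, hlen⟩ := Stmt16.tour p _ G rfl v₀
  have hrc : Stmt16.rcost p G v₀ = graphCost G p := by
    rw [Stmt16.rcost_eq p G v₀ (fun v => hpre _ _)]
    unfold graphCost
    exact Stmt16.sum_indep (Stmt16.wt p) G.edgeSet _ _
      (fun e => SimpleGraph.mem_edgeFinset) (fun e => SimpleGraph.mem_edgeFinset)
  set f : ℕ → EuclideanSpace ℝ (Fin 2) := fun i => p (w.getVert i) with hf
  have hcov' : ∀ i : Fin k, ∃ m, m ≤ w.length ∧ f m = x i := by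
    intro i
    have hv : (⟨x i, hx i⟩ : ↥V) ∈ w.support :=
      hcov _ (hpre _ _)
    rw [SimpleGraph.Walk.mem_support_iff_exists_getVert] at hv
    obtain ⟨m, hm1, hm2⟩ := hv
    exact ⟨m, hm2, by rw [hf]; simp only [hm1]; rfl⟩
  have hext := Stmt16.extract f w.length (r/2) (by linarith) x
    (fun i j hij => hsep i j hij) hcov'
  have hws : Stmt16.wlen p w = ∑ i ∈ Finset.range w.length, dist (f i) (f (i+1)) :=
    Stmt16.wlen_eq_sum p w
  rw [← hws] at hext
  rw [hrc] at hlen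
  have := hext.trans hlen
  nlinarith [this]
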